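/- For each α > 0, there exist constants c₁ > 0 and c₂ ∈ ℝ such that for all k ≥ 1, γ_k(ω_α) ≥ c₁ · exp(−c₂ · k · log k), where ω_α = { i^{−α} : i = 1, 2, … } ⊆ (0,1]. -/

import Mathlib

open Set Finset

/-- `γ_k(E)`: the supremum over `k`-tuples of points of `E` of `min_i ∏_{j≠i} |xᵢ - xⱼ|`. -/
noncomputable def gammaK (k : ℕ) (E : Set ℝ) : ℝ :=
  ⨆ x : { x : Fin k → ℝ // ∀ i, x i ∈ E },
    ⨅ i : Fin k, ∏ j ∈ Finset.univ.erase i, |x.1 i - x.1 j|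

/-- The set `ω_α = { i^{-α} : i = 1, 2, … }`. -/
def omegaAlpha (α : ℝ) : Set ℝ := {x : ℝ | ∃ i : ℕ, 1 ≤ i ∧ x = (i : ℝ) ^ (-α)}

/-- Gap lower bound: for `1 ≤ a < b ≤ k`, `a^{-α} - b^{-α} ≥ α k^{-(α+1)}`. -/
lemma diff_lb (α : ℝ) (hα : 0 < α) {a b k : ℕ} (ha : 1 ≤ a) (hab : a < b) (hbk : b ≤ k) :
    α * (k : ℝ) ^ (-(α + 1)) ≤ (a : ℝ) ^ (-α) - (b : ℝ) ^ (-α) := by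
  have haR : (0:ℝ) < a := by exact_mod_cast ha
  have hbR : (0:ℝ) < b := by exact_mod_cast lt_of_le_of_lt (Nat.zero_le a) hab
  have hkR : (0:ℝ) < k := lt_of_lt_of_le hbR (by exact_mod_cast hbk)
  set s : ℝ := (a : ℝ) + 1 with hs
  have hsR : (0:ℝ) < s := by positivity
  have hsb : s ≤ (b : ℝ) := by
    have h' : a + 1 ≤ b := hab
    rw [hs]
    exact_mod_cast h' 
  have hsk : s ≤ (k : ℝ) := hsb.trans (by exact_mod_cast hbk)
  have h1 : (b : ℝ) ^ (-α) ≤ s ^ (-α) :=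
    Real.rpow_le_rpow_of_nonpos hsR hsb (by linarith)
  have h2 : s ^ (-α) ≥ (k : ℝ) ^ (-α) :=
    Real.rpow_le_rpow_of_nonpos hsR hsk (by linarith)
  -- log s - log a ≥ 1/s
  have hlog : 1 / s ≤ Real.log s - Real.log a := by
    have h := Real.log_le_sub_one_of_pos (x := (a : ℝ) / s) (by positivity)
    rw [Real.log_div (ne_of_gt haR) (ne_of_gt hsR)] at h
    have hx : (a : ℝ) / s = 1 - 1 / s := by
      rw [hs]; field_simp; ring
    rw [hx] at h
    linarith
  -- a^{-α} - s^{-α} ≥ s^{-α} * (α * (log s - log a))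
  have hkey : s ^ (-α) * (α * (Real.log s - Real.log a)) ≤ (a : ℝ) ^ (-α) - s ^ (-α) := by
    have hea : (a : ℝ) ^ (-α) = Real.exp (Real.log s * (-α)) *
        Real.exp (α * (Real.log s - Real.log a)) := by
      rw [Real.rpow_def_of_pos haR, ← Real.exp_add]
      congr 1; ring
    have hes : s ^ (-α) = Real.exp (Real.log s * (-α)) := Real.rpow_def_of_pos hsR _
    rw [hea, hes]
    have hu : α * (Real.log s - Real.log a) + 1 ≤ Real.exp (α * (Real.log s - Real.log a)) :=
      Real.add_one_le_exp _
    have hpos : 0 < Real.exp (Real.log s * (-α)) := Real.exp_pos _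
    nlinarith
  have hmid : α * (k : ℝ) ^ (-(α + 1)) ≤ s ^ (-α) * (α * (Real.log s - Real.log a)) := by
    have h3 : (k : ℝ) ^ (-(α + 1)) = (k : ℝ) ^ (-α) * (1 / (k : ℝ)) := by
      rw [show -(α + 1) = -α + (-1) by ring, Real.rpow_add hkR, Real.rpow_neg_one]
      rw [one_div]
    rw [h3]
    have h4 : (1 : ℝ) / k ≤ 1 / s := by
      apply one_div_le_one_div_of_le hsR hsk
    have h5 : α / k ≤ α * (Real.log s - Real.log a) := by
      have := mul_le_mul_of_nonneg_left (h4.trans hlog) hα.le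
      calc α / k = α * (1 / k) := by ring
        _ ≤ _ := this
    have h6 : 0 ≤ α * (Real.log s - Real.log a) := le_trans (by positivity) h5
    calc α * ((k:ℝ) ^ (-α) * (1 / k)) = (k:ℝ) ^ (-α) * (α / k) := by ring
      _ ≤ (k:ℝ) ^ (-α) * (α * (Real.log s - Real.log a)) := by
          apply mul_le_mul_of_nonneg_left h5 (Real.rpow_nonneg hkR.le _)
      _ ≤ s ^ (-α) * (α * (Real.log s - Real.log a)) := by
          apply mul_le_mul_of_nonneg_right h2 h6
  linarith

/-- For each `α > 0` there are `c₁ > 0` and `c₂ ∈ ℝ` with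
`γ_k(ω_α) ≥ c₁ exp(-c₂ k log k)` for all `k ≥ 1`. -/
theorem gammaK_omegaAlpha_lower_bound (α : ℝ) (hα : 0 < α) :
    ∃ c₁ > (0:ℝ), ∃ c₂ : ℝ, ∀ k : ℕ, 1 ≤ k →
      c₁ * Real.exp (-(c₂ * k * Real.log k)) ≤ gammaK k (omegaAlpha α) := by
  refine ⟨1, one_pos, (α + 1) + max 0 (-Real.log α) / Real.log 2, fun k hk => ?_⟩
  have hkR : (0:ℝ) < k := by exact_mod_cast hk
  haveI : Nonempty (Fin k) := ⟨⟨0, hk⟩⟩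
  set g : ℝ := α * (k : ℝ) ^ (-(α + 1)) with hg
  have hgpos : 0 < g := by positivity
  set x : Fin k → ℝ := fun i => (((i : ℕ) + 1 : ℕ) : ℝ) ^ (-α) with hx
  have hmem : ∀ i, x i ∈ omegaAlpha α := fun i => ⟨(i : ℕ) + 1, Nat.le_add_left 1 i, rfl⟩
  have hx01 : ∀ y ∈ omegaAlpha α, 0 < y ∧ y ≤ 1 := by
    rintro y ⟨n, hn, rfl⟩
    have hn1 : (1:ℝ) ≤ n := by exact_mod_cast hn
    exact ⟨Real.rpow_pos_of_pos (by linarith) _,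
      Real.rpow_le_one_of_one_le_of_nonpos hn1 (by linarith)⟩
  have hbdd : BddAbove (Set.range fun y : { y : Fin k → ℝ // ∀ i, y i ∈ omegaAlpha α } =>
      ⨅ i : Fin k, ∏ j ∈ Finset.univ.erase i, |y.1 i - y.1 j|) := by
    refine ⟨1, ?_⟩
    rintro _ ⟨y, rfl⟩
    have hle1 : ∀ i : Fin k, ∏ j ∈ Finset.univ.erase i, |y.1 i - y.1 j| ≤ 1 := by
      intro i
      apply Finset.prod_le_one (fun j _ => abs_nonneg _)
      intro j _
      obtain ⟨h1, h2⟩ := hx01 _ (y.2 i)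
      obtain ⟨h3, h4⟩ := hx01 _ (y.2 j)
      rw [abs_le]; constructor <;> linarith
    have hbb : BddBelow (Set.range fun i : Fin k =>
        ∏ j ∈ Finset.univ.erase i, |y.1 i - y.1 j|) :=
      ⟨0, by rintro _ ⟨i, rfl⟩; exact Finset.prod_nonneg fun j _ => abs_nonneg _⟩
    exact le_trans (ciInf_le hbb (Classical.arbitrary (Fin k))) (hle1 _)
  have hgap : ∀ i j : Fin k, i ≠ j → g ≤ |x i - x j| := by
    intro i j hij
    have hij' : (i : ℕ) ≠ (j : ℕ) := fun h => hij (Fin.ext h)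
    rcases lt_or_gt_of_ne hij' with h | h
    · have hd := diff_lb α hα (a := (i:ℕ)+1) (b := (j:ℕ)+1) (k := k)
        (Nat.le_add_left 1 i) (by omega) (by omega)
      exact le_trans (by rw [hg, show -(α+1) = -1 + -α from by ring]; simpa [hx] using hd) (le_abs_self _)
    · have hd := diff_lb α hα (a := (j:ℕ)+1) (b := (i:ℕ)+1) (k := k)
        (Nat.le_add_left 1 j) (by omega) (by omega)
      rw [abs_sub_comm]
      exact le_trans (by rw [hg, show -(α+1) = -1 + -α from by ring]; simpa [hx] using hd) (le_abs_self _)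
  have hprod : ∀ i : Fin k, g ^ (k-1) ≤ ∏ j ∈ Finset.univ.erase i, |x i - x j| := by
    intro i
    calc g ^ (k-1) = ∏ _j ∈ Finset.univ.erase i, g := by
          rw [Finset.prod_const, Finset.card_erase_of_mem (Finset.mem_univ i),
            Finset.card_univ, Fintype.card_fin]
      _ ≤ _ := Finset.prod_le_prod (fun _ _ => hgpos.le)
          (fun j hj => hgap i j (Finset.ne_of_mem_erase hj).symm)
  have hinf : g ^ (k-1) ≤ ⨅ i : Fin k, ∏ j ∈ Finset.univ.erase i, |x i - x j| :=
    le_ciInf hprod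
  have hsup : (⨅ i : Fin k, ∏ j ∈ Finset.univ.erase i, |x i - x j|)
      ≤ gammaK k (omegaAlpha α) := le_ciSup hbdd ⟨x, hmem⟩
  -- numeric comparison
  have hnum : Real.exp (-(((α + 1) + max 0 (-Real.log α) / Real.log 2) * k * Real.log k))
      ≤ g ^ (k-1) := by
    have hglog : g ^ (k-1) = Real.exp (((k-1 : ℕ) : ℝ) *
        (Real.log α + (-(α+1)) * Real.log k)) := by
      rw [Real.exp_nat_mul, ← Real.log_rpow hkR, ← Real.log_mul hα.ne'
        (ne_of_gt (Real.rpow_pos_of_pos hkR _)), Real.exp_log hgpos]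
    rw [hglog]
    apply Real.exp_le_exp.mpr
    have hcast : ((k-1 : ℕ) : ℝ) = (k:ℝ) - 1 := by
      have := Nat.cast_sub hk (R := ℝ); simpa using this
    rw [hcast]
    set M := max 0 (-Real.log α) with hM
    have hM0 : 0 ≤ M := le_max_left _ _
    have hMα : -M ≤ Real.log α := by
      have := le_max_right 0 (-Real.log α); linarith
    set D := M / Real.log 2 with hD
    have hlog2 : 0 < Real.log 2 := Real.log_pos (by norm_num)
    have hDval : D * Real.log 2 = M := div_mul_cancel₀ _ hlog2.ne'
    have hD0 : 0 ≤ D := div_nonneg hM0 hlog2.le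
    rcases eq_or_lt_of_le hk with h1 | h2
    · rw [← h1]; norm_num
    · have hk2 : (2:ℝ) ≤ k := by exact_mod_cast h2
      have hlogk : Real.log 2 ≤ Real.log k := Real.log_le_log (by norm_num) hk2
      have hk1' : (0:ℝ) ≤ (k:ℝ) - 1 := by linarith
      have e1 : D * k * Real.log 2 ≤ D * k * Real.log k :=
        mul_le_mul_of_nonneg_left hlogk (by positivity)
      have e2 : D * k * Real.log 2 = M * k := by rw [mul_comm D (k:ℝ), mul_assoc, hDval]; ring
      have e3 : ((k:ℝ) - 1) * (-M) ≤ ((k:ℝ) - 1) * Real.log α :=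
        mul_le_mul_of_nonneg_left hMα hk1'
      have e4 : 0 ≤ (α+1) * Real.log k := mul_nonneg (by linarith) (by linarith)
      nlinarith [e1, e2, e3, e4, hM0, hkR]
  calc (1:ℝ) * Real.exp (-(((α + 1) + max 0 (-Real.log α) / Real.log 2) * k * Real.log k))
      = Real.exp (-(((α + 1) + max 0 (-Real.log α) / Real.log 2) * k * Real.log k)) := one_mul _
    _ ≤ g ^ (k-1) := hnum
    _ ≤ _ := le_trans hinf hsup
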